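/- Let T be a semigroup of continuous self-maps of a compact Hausdorff space X such that the semiflow (T, X) is minimal and universally transitive. Then (T, X) is weakly almost periodic if and only if (T, X) is equicontinuous. -/

import Mathlib

open Set Filter Topology Uniformity
open scoped SetRel

namespace WapEquic


variable {X : Type*} [uX : UniformSpace X]

/-- Pseudometrization lemma: for any entourage `ε` there is a pseudometric `ρ`
whose "balls" are entourages, which is (jointly) continuous, and whose unit
ball is contained in `ε`. -/
lemma exists_pseudometric_aux {ε : Set (X × X)} (hε : ε ∈ 𝓤 X) :
    ∃ ρ : X → X → ℝ, (∀ x y, 0 ≤ ρ x y) ∧ (∀ x, ρ x x = 0) ∧ (∀ x y, ρ x y = ρ y x) ∧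
      (∀ x y z, ρ x z ≤ ρ x y + ρ y z) ∧
      (∀ η : ℝ, 0 < η → {p : X × X | ρ p.1 p.2 < η} ∈ 𝓤 X) ∧
      (∀ x y, ρ x y < 1 → (x, y) ∈ ε) := by
  -- a decreasing chain of symmetric entourages
  have chain : ∀ s : Set (X × X), s ∈ 𝓤 X →
      ∃ t : {u : Set (X × X) // u ∈ 𝓤 X}, SetRel.IsSymm t.1 ∧ t.1 ○ t.1 ⊆ s ∧ t.1 ⊆ s := by
    intro s hs
    obtain ⟨t, ht, hsymm, hsub⟩ := comp_symm_mem_uniformity_sets hs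
    refine ⟨⟨t, ht⟩, hsymm, hsub, fun p hp => hsub ⟨p.1, refl_mem_uniformity ht, hp⟩⟩
  choose f hfsymm hfcomp hfsub using chain
  let V : ℕ → {u : Set (X × X) // u ∈ 𝓤 X} := fun n =>
    Nat.rec (f ε hε) (fun _ t => f t.1 t.2) n
  have hVsucc : ∀ n, V (n + 1) = f (V n).1 (V n).2 := fun n => rfl
  have hVsymm : ∀ n, SetRel.IsSymm (V n).1 := by
    intro n
    cases n with
    | zero => exact hfsymm ε hε
    | succ m => rw [hVsucc]; exact hfsymm _ _
  have hVcomp : ∀ n, (V (n + 1)).1 ○ (V (n + 1)).1 ⊆ (V n).1 := by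
    intro n; rw [hVsucc]; exact hfcomp _ _
  have hVsub : ∀ n, (V (n + 1)).1 ⊆ (V n).1 := by
    intro n; rw [hVsucc]; exact hfsub _ _
  have hV0 : (V 0).1 ⊆ ε := hfsub ε hε
  have hVanti : Antitone fun n => (V n).1 := antitone_nat_of_succ_le hVsub
  -- the coarser uniformity generated by the chain
  let F : Filter (X × X) := ⨅ n, 𝓟 (V n).1
  have hFbasis : F.HasBasis (fun _ : ℕ => True) (fun n => (V n).1) := by
    refine hasBasis_iInf_principal ?_
    intro a b
    exact ⟨max a b, hVanti (le_max_left a b), hVanti (le_max_right a b)⟩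
  have hmemF : ∀ n, (V n).1 ∈ F := fun n => mem_iInf_of_mem n (mem_principal_self _)
  have hle : 𝓤 X ≤ F := le_iInf fun n => le_principal_iff.2 (V n).2
  let core : UniformSpace.Core X :=
    { uniformity := F
      refl := by
        refine le_iInf fun n => ?_
        simp only [le_principal_iff, mem_principal]
        rintro ⟨a, b⟩ hp
        rw [SetRel.mem_id] at hp
        subst hp
        exact refl_mem_uniformity (V n).2
      symm := by
        refine le_iInf fun n => le_principal_iff.2 ?_
        refine mem_map.2 (mem_of_superset (hmemF n) ?_)
        rintro ⟨a, b⟩ hp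
        exact (by haveI := hVsymm n; exact SetRel.symm (V n).1 hp)
      comp := by
        refine le_iInf fun n => le_principal_iff.2 ?_
        exact mem_of_superset (mem_lift' (hmemF (n + 1))) (hVcomp n) }
  let u' : UniformSpace X := UniformSpace.ofCore core
  have hu' : @uniformity X u' = F := rfl
  have hcg : @Filter.IsCountablyGenerated (X × X) F := hFbasis.isCountablyGenerated
  obtain ⟨I, hI⟩ := @UniformSpace.metrizable_uniformity X u'
    (by rw [hu']; exact hcg)
  -- dist with respect to I
  have hIU : @uniformity X I.toUniformSpace = F := by rw [hI, hu']
  set d : X → X → ℝ := @dist X I.toDist with hd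
  have hd_self : ∀ x, d x x = 0 := I.dist_self
  have hd_comm : ∀ x y, d x y = d y x := I.dist_comm
  have hd_tri : ∀ x y z, d x z ≤ d x y + d y z := I.dist_triangle
  have hd_nonneg : ∀ x y, 0 ≤ d x y := fun x y => @dist_nonneg X I x y
  -- small d-sets belong to F
  have hball : ∀ η : ℝ, 0 < η → {p : X × X | d p.1 p.2 < η} ∈ F := by
    intro η hη
    rw [← hIU]
    exact @Metric.dist_mem_uniformity X I η hη
  -- some d-ball is inside V 0
  have hsub0 : ∃ r : ℝ, 0 < r ∧ ∀ x y, d x y < r → (x, y) ∈ (V 0).1 := by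
    have h0 : (V 0).1 ∈ @uniformity X I.toUniformSpace := by rw [hIU]; exact hmemF 0
    obtain ⟨r, hr, h⟩ := (@Metric.mem_uniformity_dist X I _).1 h0
    exact ⟨r, hr, fun x y hxy => h hxy⟩
  obtain ⟨r, hr, hrsub⟩ := hsub0
  have hρball : ∀ η : ℝ, 0 < η → {p : X × X | d p.1 p.2 / r < η} ∈ @uniformity X uX := by
    intro η hη
    have h1 : {p : X × X | d p.1 p.2 < η * r} ∈ F := hball _ (mul_pos hη hr)
    refine hle (mem_of_superset h1 ?_)
    intro p hp
    simp only [mem_setOf_eq] at hp ⊢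
    rw [div_lt_iff₀ hr]
    exact hp
  refine ⟨fun x y => d x y / r, ?_, ?_, ?_, ?_, hρball, ?_⟩
  · exact fun x y => div_nonneg (hd_nonneg x y) hr.le
  · intro x; show d x x / r = 0; rw [hd_self, zero_div]
  · intro x y; show d x y / r = d y x / r; rw [hd_comm]
  · intro x y z
    show d x z / r ≤ d x y / r + d y z / r
    rw [← add_div, div_le_div_iff_of_pos_right hr]
    exact hd_tri x y z
  · intro x y hxy
    rw [div_lt_one hr] at hxy
    exact hV0 (hrsub x y hxy)

/-- Continuity of a pseudometric whose small sets are entourages. -/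
lemma continuous_of_ball_mem {ρ : X → X → ℝ}
    (hsymm : ∀ x y, ρ x y = ρ y x) (htri : ∀ x y z, ρ x z ≤ ρ x y + ρ y z)
    (hball : ∀ η : ℝ, 0 < η → {p : X × X | ρ p.1 p.2 < η} ∈ 𝓤 X) :
    Continuous fun p : X × X => ρ p.1 p.2 := by
  rw [continuous_iff_continuousAt]
  rintro ⟨a, b⟩
  rw [ContinuousAt, Metric.tendsto_nhds]
  intro η hη
  have h2 : {p : X × X | ρ p.1 p.2 < η / 2} ∈ 𝓤 X := hball _ (by positivity)
  have hmem : {q : X × X | ρ a q.1 < η / 2 ∧ ρ b q.2 < η / 2} ∈ 𝓝 (a, b) := by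
    rw [nhds_prod_eq]
    have h1a : {x : X | ρ a x < η / 2} ∈ 𝓝 a := by
      have := UniformSpace.ball_mem_nhds a h2
      simpa [UniformSpace.ball] using this
    have h1b : {y : X | ρ b y < η / 2} ∈ 𝓝 b := by
      have := UniformSpace.ball_mem_nhds b h2
      simpa [UniformSpace.ball] using this
    filter_upwards [prod_mem_prod h1a h1b] with q hq using ⟨hq.1, hq.2⟩
  refine eventually_of_mem hmem ?_
  rintro ⟨x, y⟩ ⟨hx, hy⟩
  have key : |ρ x y - ρ a b| ≤ ρ a x + ρ b y := by
    rw [abs_le]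
    constructor
    · have h3 : ρ a b ≤ ρ a x + (ρ x y + ρ y b) :=
        le_trans (htri a x b) (by linarith [htri x y b])
      have h4 : ρ y b = ρ b y := hsymm y b
      linarith
    · have h3 : ρ x y ≤ ρ x a + (ρ a b + ρ b y) :=
        le_trans (htri x a y) (by linarith [htri a b y])
      have h4 : ρ x a = ρ a x := hsymm x a
      linarith
  have : ρ a x + ρ b y < η := by linarith
  calc dist (ρ x y) (ρ a b) = |ρ x y - ρ a b| := Real.dist_eq _ _
    _ ≤ ρ a x + ρ b y := key
    _ < η := this

/-- Pseudometrization lemma, full version. -/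
lemma exists_pseudometric {ε : Set (X × X)} (hε : ε ∈ 𝓤 X) :
    ∃ ρ : X → X → ℝ, (∀ x y, 0 ≤ ρ x y) ∧ (∀ x, ρ x x = 0) ∧ (∀ x y, ρ x y = ρ y x) ∧
      (∀ x y z, ρ x z ≤ ρ x y + ρ y z) ∧
      (∀ η : ℝ, 0 < η → {p : X × X | ρ p.1 p.2 < η} ∈ 𝓤 X) ∧
      (Continuous fun p : X × X => ρ p.1 p.2) ∧
      (∀ x y, ρ x y < 1 → (x, y) ∈ ε) := by
  obtain ⟨ρ, h1, h2, h3, h4, h5, h6⟩ := exists_pseudometric_aux hε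
  exact ⟨ρ, h1, h2, h3, h4, h5, continuous_of_ball_mem h3 h4 h5, h6⟩

section Ellis

variable [CompactSpace X] [T2Space X]

/-- Ellis–Numakura applied to a compact set of self-maps closed under composition. -/
lemma ellis_idem {S : Set (X → X)} (hne : S.Nonempty) (hcp : IsCompact S)
    (hmul : ∀ p ∈ S, ∀ q ∈ S, p ∘ q ∈ S) : ∃ u ∈ S, u ∘ u = u := by
  haveI : Nonempty S := hne.to_subtype
  haveI : CompactSpace S := isCompact_iff_compactSpace.1 hcp
  letI : Semigroup S :=
    { mul := fun a b => ⟨a.1 ∘ b.1, hmul _ a.2 _ b.2⟩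
      mul_assoc := fun a b c => Subtype.ext rfl }
  obtain ⟨m, hm⟩ := exists_idempotent_of_compact_t2_of_continuous_mul_left (M := S)
    (fun r => by
      have h1 : Continuous fun a : S => a.1 ∘ r.1 :=
        continuous_pi fun x => (continuous_apply (r.1 x)).comp continuous_subtype_val
      exact h1.subtype_mk fun a => hmul _ a.2 _ r.2)
  exact ⟨m.1, m.2, congrArg Subtype.val hm⟩

/-- In the Ellis semigroup situation, if every idempotent is the identity then every
element has a two-sided compositional inverse inside the semigroup. -/
lemma exists_inverse {E : Set (X → X)} (hcl : IsClosed E)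
    (hmul : ∀ p ∈ E, ∀ q ∈ E, p ∘ q ∈ E) (hcont : ∀ g ∈ E, Continuous g)
    (hidem : ∀ u ∈ E, u ∘ u = u → u = id) {p : X → X} (hp : p ∈ E) :
    ∃ q ∈ E, q ∘ p = id ∧ p ∘ q = id := by
  have hEcp : IsCompact E := hcl.isCompact
  -- left ideal E ∘ p
  have hcontR : Continuous fun q : X → X => q ∘ p :=
    continuous_pi fun x => continuous_apply (p x)
  have hLcp : IsCompact ((fun q => q ∘ p) '' E) := hEcp.image hcontR
  have hLsub : (fun q => q ∘ p) '' E ⊆ E := by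
    rintro _ ⟨q, hq, rfl⟩; exact hmul _ hq _ hp
  have hLmul : ∀ a ∈ (fun q => q ∘ p) '' E, ∀ b ∈ (fun q => q ∘ p) '' E,
      a ∘ b ∈ (fun q => q ∘ p) '' E := by
    rintro _ ⟨a, ha, rfl⟩ _ ⟨b, hb, rfl⟩
    exact ⟨a ∘ (p ∘ b), hmul _ ha _ (hmul _ hp _ hb), rfl⟩
  obtain ⟨u, huL, huu⟩ := ellis_idem ((Set.nonempty_of_mem hp).image _) hLcp hLmul
  have hu_id : u = id := hidem u (hLsub huL) huu
  obtain ⟨q, hq, hqp0⟩ := huL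
  have hqp : q ∘ p = u := hqp0
  -- right ideal p ∘ E
  have hcontL : Continuous fun r : X → X => p ∘ r :=
    continuous_pi fun x => (hcont p hp).comp (continuous_apply x)
  have hRcp : IsCompact ((fun r => p ∘ r) '' E) := hEcp.image hcontL
  have hRsub : (fun r => p ∘ r) '' E ⊆ E := by
    rintro _ ⟨r, hr, rfl⟩; exact hmul _ hp _ hr
  have hRmul : ∀ a ∈ (fun r => p ∘ r) '' E, ∀ b ∈ (fun r => p ∘ r) '' E,
      a ∘ b ∈ (fun r => p ∘ r) '' E := by
    rintro _ ⟨a, ha, rfl⟩ _ ⟨b, hb, rfl⟩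
    exact ⟨a ∘ (p ∘ b), hmul _ ha _ (hmul _ hp _ hb), rfl⟩
  obtain ⟨v, hvR, hvv⟩ := ellis_idem ((Set.nonempty_of_mem hp).image _) hRcp hRmul
  have hv_id : v = id := hidem v (hRsub hvR) hvv
  obtain ⟨q', hq', hq'p0⟩ := hvR
  have hq'p : p ∘ q' = v := hq'p0
  -- the two one-sided inverses coincide
  have hqp' : q ∘ p = id := by rw [hqp, hu_id]
  have hpq' : p ∘ q' = id := by rw [hq'p, hv_id]
  have hqq' : q = q' := by
    calc q = q ∘ (p ∘ q') := by rw [hpq']; rfl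
    _ = (q ∘ p) ∘ q' := rfl
    _ = q' := by rw [hqp']; rfl
  exact ⟨q, hq, hqp', by rw [hqq']; exact hpq'⟩

end Ellis


/-- Auxiliary: finsets with members from a countable set form a countable set. -/
lemma countable_finsets {β : Type*} {B : Set β} (hB : B.Countable) :
    {L : Finset β | ↑L ⊆ B}.Countable := by
  have h1 := Set.countable_setOf_finite_subset hB
  apply Set.countable_of_injective_of_countable_image
    (f := fun L : Finset β => (↑L : Set β))
  · intro a _ b _ hab
    exact Finset.coe_injective hab
  · apply h1.mono
    rintro _ ⟨L, hL, rfl⟩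
    exact ⟨L.finite_toSet, hL⟩

/-- Auxiliary: a finite family mapping into an increasing union lands in one stage. -/
lemma exists_stage {β γ : Type*} {C : ℕ → Set γ} (hm : Monotone C) (L : Finset β)
    (v : β → γ) (h : ∀ z ∈ L, v z ∈ ⋃ n, C n) : ∃ m, ∀ z ∈ L, v z ∈ C m := by
  classical
  induction L using Finset.induction with
  | empty => exact ⟨0, by simp⟩
  | @insert a L ha ih =>
    obtain ⟨m₁, hm₁⟩ := ih (fun z hz => h z (Finset.mem_insert_of_mem hz))
    obtain ⟨m₂, hm₂⟩ := mem_iUnion.1 (h _ (Finset.mem_insert_self _ _))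
    refine ⟨max m₁ m₂, ?_⟩
    intro z hz
    rcases Finset.mem_insert.1 hz with rfl | hz
    · exact hm (le_max_right _ _) hm₂
    · exact hm (le_max_left _ _) (hm₁ z hz)

variable {X : Type*} [uX : UniformSpace X] [CompactSpace X] [T2Space X]

/-- Basic "open" sets of self-maps determined by finite rational data. -/
def GLs {X : Type*} (ρ : X → X → ℝ) (L : Finset (X × X × ℚ × ℚ)) : Set (X → X) :=
  {g | ∀ z ∈ L, (z.2.2.1 : ℝ) < ρ (g z.1) z.2.1 ∧ ρ (g z.1) z.2.1 < (z.2.2.2 : ℝ)}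

/-- The fragmentation lemma: if `E` is a (pointwise-) closed set of continuous self-maps
of a compact Hausdorff space and `ρ` is a continuous pseudometric, then some relatively
open nonempty subset of `E` has uniform `ρ`-diameter at most `c`. -/
lemma fragmentation {E : Set (X → X)} (hcl : IsClosed E) (hne : E.Nonempty)
    (hcont : ∀ g ∈ E, Continuous g)
    {ρ : X → X → ℝ} (hρ0 : ∀ x y, 0 ≤ ρ x y) (hρs : ∀ x : X, ρ x x = 0)
    (hρsymm : ∀ x y, ρ x y = ρ y x) (hρtri : ∀ x y z, ρ x z ≤ ρ x y + ρ y z)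
    (hρcont : Continuous fun p : X × X => ρ p.1 p.2)
    {c : ℝ} (hc : 0 < c) :
    ∃ G : Set (X → X), IsOpen G ∧ (G ∩ E).Nonempty ∧
      ∀ g ∈ G ∩ E, ∀ g' ∈ G ∩ E, ∀ k, ρ (g k) (g' k) ≤ c := by
  classical
  by_contra hcon
  push_neg at hcon
  -- hcon : ∀ G, IsOpen G → (G ∩ E).Nonempty → ∃ g ∈ G ∩ E, ∃ g' ∈ G ∩ E, ∃ k, c < ρ (g k) (g' k)
  -- continuity of coordinate maps
  have hcd : ∀ (d : X) (s : X), Continuous fun g : X → X => ρ (g d) s := by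
    intro d s
    have h1 : Continuous fun g : X → X => (g d, s) :=
      (continuous_apply d).prodMk continuous_const
    exact hρcont.comp h1
  have hcd2 : ∀ (k k' : X), Continuous fun f : X → X => ρ (f k) (f k') := by
    intro k k'
    have h1 : Continuous fun f : X → X => (f k, f k') :=
      (continuous_apply k).prodMk (continuous_apply k')
    exact hρcont.comp h1
  -- a countable ρ-dense set
  obtain ⟨S, hSc, hSdense⟩ : ∃ S : Set X, S.Countable ∧
      ∀ (x : X) (η : ℝ), 0 < η → ∃ s ∈ S, ρ x s < η := by
    have hnet : ∀ η : ℝ, 0 < η → ∃ N : Finset X, ∀ x, ∃ s ∈ N, ρ x s < η := by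
      intro η hη
      obtain ⟨t, ht⟩ := IsCompact.elim_finite_subcover (isCompact_univ (X := X))
        (fun d : X => {k | ρ k d < η})
        (fun d => by
          have h1 : Continuous fun k : X => (k, d) := continuous_id.prodMk continuous_const
          exact isOpen_lt (hρcont.comp h1) continuous_const)
        (fun x _ => mem_iUnion.2 ⟨x, by simp [hρs x, hη]⟩)
      refine ⟨t, fun x => ?_⟩
      obtain ⟨d, hd1, hd2⟩ := mem_iUnion₂.1 (ht (mem_univ x))
      exact ⟨d, hd1, hd2⟩
    have h2 : ∀ m : ℕ, ∃ N : Finset X, ∀ x, ∃ s ∈ N, ρ x s < 1 / (m + 1) :=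
      fun m => hnet _ (by positivity)
    choose N hN using h2
    refine ⟨⋃ m, ↑(N m), countable_iUnion (fun m => (N m).countable_toSet), ?_⟩
    intro x η hη
    obtain ⟨m, hm⟩ := exists_nat_one_div_lt hη
    obtain ⟨s, hs1, hs2⟩ := hN m x
    exact ⟨s, mem_iUnion.2 ⟨m, hs1⟩, by push_cast at hs2 ⊢; linarith⟩
  -- choice of finite nets
  have hnetF0 : ∀ (F : Finset (X → X)) (θ : ℚ), ∃ N : Finset X,
      ↑F ⊆ E → 0 < θ → ∀ k, ∃ d ∈ N, ∀ h ∈ F, ρ (h d) (h k) < (θ : ℝ) := by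
    intro F θ
    by_cases hFE : ↑F ⊆ E ∧ 0 < θ
    · obtain ⟨t, ht⟩ := IsCompact.elim_finite_subcover (isCompact_univ (X := X))
        (fun d : X => {k | ∀ h ∈ F, ρ (h d) (h k) < (θ : ℝ)})
        (fun d => by
          have hform : {k : X | ∀ h ∈ F, ρ (h d) (h k) < (θ : ℝ)} =
              ⋂ h ∈ F, {k | ρ (h d) (h k) < (θ : ℝ)} := by ext k; simp
          show IsOpen {k : X | ∀ h ∈ F, ρ (h d) (h k) < (θ : ℝ)}
          rw [hform]
          refine isOpen_biInter_finset fun h hh => ?_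
          have h1 : Continuous fun k : X => ((h d : X), h k) :=
            continuous_const.prodMk (hcont h (hFE.1 hh))
          exact isOpen_lt (hρcont.comp h1) continuous_const)
        (fun k _ => mem_iUnion.2 ⟨k, fun h _ => by
          rw [hρs (h k)]; exact_mod_cast hFE.2⟩)
      refine ⟨t, fun _ _ k => ?_⟩
      obtain ⟨d, hd1, hd2⟩ := mem_iUnion₂.1 (ht (mem_univ k))
      exact ⟨d, hd1, hd2⟩
    · refine ⟨∅, fun h1 h2 => absurd ⟨h1, h2⟩ hFE⟩
  choose netF hnetF using hnetF0
  -- basic open sets from finite data over X × X × ℚ × ℚ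
  have hGLopen : ∀ L, IsOpen (GLs ρ L) := by
    intro L
    have hform : GLs ρ L = ⋂ z ∈ L,
        ({g : X → X | (z.2.2.1 : ℝ) < ρ (g z.1) z.2.1} ∩
          {g | ρ (g z.1) z.2.1 < (z.2.2.2 : ℝ)}) := by
      ext g; simp [GLs, forall_and]
    rw [hform]
    refine isOpen_biInter_finset fun z hz => ?_
    exact (isOpen_lt continuous_const (hcd z.1 z.2.1)).inter
      (isOpen_lt (hcd z.1 z.2.1) continuous_const)
  -- choice of separated pairs in basic open sets
  have hpick0 : ∀ L : Finset (X × X × ℚ × ℚ), ∃ gg : (X → X) × (X → X),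
      (GLs ρ L ∩ E).Nonempty → gg.1 ∈ GLs ρ L ∩ E ∧ gg.2 ∈ GLs ρ L ∩ E ∧
        ∃ k, c < ρ (gg.1 k) (gg.2 k) := by
    intro L
    by_cases hLE : (GLs ρ L ∩ E).Nonempty
    · obtain ⟨g, hg, g', hg', k, hk⟩ := hcon (GLs ρ L) (hGLopen L) hLE
      exact ⟨(g, g'), fun _ => ⟨hg, hg', k, hk⟩⟩
    · exact ⟨(id, id), fun h => absurd h hLE⟩
  choose pick hpick using hpick0
  -- the recursion producing countable stages
  obtain ⟨A, D, hA0, hD0, hAsucc, hDsucc⟩ :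
      ∃ (A : ℕ → Set (X → X)) (D : ℕ → Set X), A 0 = ∅ ∧ D 0 = ∅ ∧
        (∀ n, A (n + 1) = A n ∪ ⋃ L ∈ {L : Finset (X × X × ℚ × ℚ) |
            (∀ z ∈ L, z.1 ∈ D n ∧ z.2.1 ∈ S) ∧ (GLs ρ L ∩ E).Nonempty},
            ({(pick L).1, (pick L).2} : Set (X → X))) ∧
        (∀ n, D (n + 1) = D n ∪ ⋃ F ∈ {F : Finset (X → X) | ↑F ⊆ A n},
            ⋃ θ ∈ {q : ℚ | 0 < q}, (↑(netF F θ) : Set X)) := by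
    refine ⟨fun n => (Nat.rec ((∅ : Set (X → X)), (∅ : Set X)) (fun _ p =>
        (p.1 ∪ ⋃ L ∈ {L : Finset (X × X × ℚ × ℚ) |
            (∀ z ∈ L, z.1 ∈ p.2 ∧ z.2.1 ∈ S) ∧ (GLs ρ L ∩ E).Nonempty},
            ({(pick L).1, (pick L).2} : Set (X → X)),
         p.2 ∪ ⋃ F ∈ {F : Finset (X → X) | ↑F ⊆ p.1},
            ⋃ θ ∈ {q : ℚ | 0 < q}, (↑(netF F θ) : Set X))) n :
        Set (X → X) × Set X).1,
      fun n => (Nat.rec ((∅ : Set (X → X)), (∅ : Set X)) (fun _ p =>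
        (p.1 ∪ ⋃ L ∈ {L : Finset (X × X × ℚ × ℚ) |
            (∀ z ∈ L, z.1 ∈ p.2 ∧ z.2.1 ∈ S) ∧ (GLs ρ L ∩ E).Nonempty},
            ({(pick L).1, (pick L).2} : Set (X → X)),
         p.2 ∪ ⋃ F ∈ {F : Finset (X → X) | ↑F ⊆ p.1},
            ⋃ θ ∈ {q : ℚ | 0 < q}, (↑(netF F θ) : Set X))) n :
        Set (X → X) × Set X).2,
      rfl, rfl, fun n => rfl, fun n => rfl⟩
  have hAmono : Monotone A := by
    apply monotone_nat_of_le_succ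
    intro n
    rw [hAsucc n]
    exact subset_union_left
  have hDmono : Monotone D := by
    apply monotone_nat_of_le_succ
    intro n
    rw [hDsucc n]
    exact subset_union_left
  have hAE : ∀ n, A n ⊆ E := by
    intro n
    induction n with
    | zero => rw [hA0]; exact empty_subset E
    | succ m ih =>
      rw [hAsucc m]
      refine union_subset ih ?_
      refine iUnion₂_subset fun L hL => ?_
      obtain ⟨h1, h2, _⟩ := hpick L hL.2
      intro g hg
      rcases hg with rfl | hg
      · exact h1.2
      · rw [mem_singleton_iff] at hg
        subst hg
        exact h2.2
  have hAcount : ∀ n, (A n).Countable ∧ (D n).Countable := by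
    intro n
    induction n with
    | zero => rw [hA0, hD0]; exact ⟨countable_empty, countable_empty⟩
    | succ m ih =>
      constructor
      · rw [hAsucc m]
        refine ih.1.union ?_
        refine Set.Countable.biUnion ?_ fun L _ => ?_
        · refine (countable_finsets ((ih.2.prod (hSc.prod
            (Set.to_countable (univ : Set (ℚ × ℚ)))))) ).mono ?_
          rintro L ⟨hL, -⟩
          intro z hz
          obtain ⟨h1, h2⟩ := hL z hz
          exact ⟨h1, h2, mem_univ _⟩
        · exact (countable_singleton _).insert _
      · rw [hDsucc m]
        refine ih.2.union ?_
        refine Set.Countable.biUnion (countable_finsets ih.1) fun F _ => ?_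
        refine Set.Countable.biUnion (Set.to_countable _) fun θ _ => ?_
        exact (netF F θ).countable_toSet
  have hP1 : ∀ (n : ℕ) (L : Finset (X × X × ℚ × ℚ)),
      (∀ z ∈ L, z.1 ∈ D n ∧ z.2.1 ∈ S) → (GLs ρ L ∩ E).Nonempty →
      (pick L).1 ∈ A (n + 1) ∧ (pick L).2 ∈ A (n + 1) := by
    intro n L hL hne'
    rw [hAsucc n]
    constructor
    · exact mem_union_right _ (mem_biUnion ⟨hL, hne'⟩ (mem_insert _ _))
    · exact mem_union_right _
        (mem_biUnion ⟨hL, hne'⟩ (mem_insert_of_mem _ (mem_singleton _)))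
  have hP2 : ∀ (n : ℕ) (F : Finset (X → X)) (θ : ℚ), ↑F ⊆ A n → 0 < θ →
      (↑(netF F θ) : Set X) ⊆ D (n + 1) := by
    intro n F θ hF hθ
    rw [hDsucc n]
    intro d hd
    exact mem_union_right _ (mem_biUnion hF (mem_biUnion hθ hd))
  -- the countable core and its closure
  set Aω : Set (X → X) := ⋃ n, A n with hAω
  set Dω : Set X := ⋃ n, D n with hDω
  set Hs : Set (X → X) := closure Aω with hHs
  have hAωE : Aω ⊆ E := iUnion_subset hAE
  have hHsE : Hs ⊆ E := closure_minimal hAωE hcl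
  have hHscp : IsCompact Hs := isClosed_closure.isCompact
  have hHscont : ∀ g ∈ Hs, Continuous g := fun g hg => hcont g (hHsE hg)
  -- the modulus of continuity lemma
  have hML : ∀ g ∈ Hs, ∀ η : ℝ, 0 < η → ∃ F : Finset (X → X), ↑F ⊆ Aω ∧ ∃ θ : ℚ,
      0 < θ ∧ ∀ k k', (∀ h ∈ F, ρ (h k) (h k') ≤ (θ : ℝ)) → ρ (g k) (g k') < η := by
    intro g hg η hη
    by_contra hML'
    push_neg at hML'
    -- a directed family of nonempty closed sets
    let J := {F : Finset (X → X) // ↑F ⊆ Aω} × {q : ℚ // 0 < q}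
    let Z : J → Set (X × X) := fun j =>
      {kk : X × X | (∀ h ∈ j.1.1, ρ (h kk.1) (h kk.2) ≤ (j.2.1 : ℝ)) ∧
        η ≤ ρ (g kk.1) (g kk.2)}
    have hZne : ∀ j, (Z j).Nonempty := by
      rintro ⟨⟨F, hF⟩, ⟨θ, hθ⟩⟩
      obtain ⟨k, k', h1, h2⟩ := hML' F hF θ hθ
      exact ⟨(k, k'), h1, h2⟩
    have hZclosed : ∀ j, IsClosed (Z j) := by
      rintro ⟨⟨F, hF⟩, ⟨θ, hθ⟩⟩
      refine IsClosed.inter ?_ ?_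
      · have hform : {kk : X × X | ∀ h ∈ F, ρ (h kk.1) (h kk.2) ≤ (θ : ℝ)} =
            ⋂ h ∈ F, {kk : X × X | ρ (h kk.1) (h kk.2) ≤ (θ : ℝ)} := by ext kk; simp
        show IsClosed {kk : X × X | ∀ h ∈ F, ρ (h kk.1) (h kk.2) ≤ (θ : ℝ)}
        rw [hform]
        refine isClosed_biInter fun h hh => ?_
        have hhc : Continuous h := hcont h (hAωE (hF hh))
        have h1 : Continuous fun kk : X × X => (h kk.1, h kk.2) :=
          (hhc.comp continuous_fst).prodMk (hhc.comp continuous_snd)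
        exact isClosed_le (hρcont.comp h1) continuous_const
      · have hgc : Continuous g := hHscont g hg
        have h1 : Continuous fun kk : X × X => (g kk.1, g kk.2) :=
          (hgc.comp continuous_fst).prodMk (hgc.comp continuous_snd)
        exact isClosed_le continuous_const (hρcont.comp h1)
    have hZdir : Directed (· ⊇ ·) Z := by
      rintro ⟨⟨F₁, hF₁⟩, ⟨θ₁, hθ₁⟩⟩ ⟨⟨F₂, hF₂⟩, ⟨θ₂, hθ₂⟩⟩
      refine ⟨⟨⟨F₁ ∪ F₂, by
        rw [Finset.coe_union]; exact union_subset hF₁ hF₂⟩,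
        ⟨min θ₁ θ₂, lt_min hθ₁ hθ₂⟩⟩, ?_, ?_⟩
      · rintro ⟨k, k'⟩ ⟨h1, h2⟩
        refine ⟨fun h hh => ?_, h2⟩
        refine le_trans (h1 h (Finset.mem_union_left _ hh)) ?_
        exact_mod_cast min_le_left θ₁ θ₂
      · rintro ⟨k, k'⟩ ⟨h1, h2⟩
        refine ⟨fun h hh => ?_, h2⟩
        refine le_trans (h1 h (Finset.mem_union_right _ hh)) ?_
        exact_mod_cast min_le_right θ₁ θ₂
    haveI : Nonempty J := ⟨⟨⟨∅, by simp⟩, ⟨1, one_pos⟩⟩⟩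
    obtain ⟨⟨k, k'⟩, hkk⟩ := IsCompact.nonempty_iInter_of_directed_nonempty_isCompact_isClosed
      Z hZdir hZne (fun j => (hZclosed j).isCompact) hZclosed
    -- all elements of Aω collapse the pair (k, k')
    have hcollapse : ∀ h ∈ Aω, ρ (h k) (h k') = 0 := by
      intro h hh
      refine le_antisymm ?_ (hρ0 _ _)
      by_contra hpos
      push_neg at hpos
      obtain ⟨q, hq1, hq2⟩ := exists_rat_btwn hpos
      have hq1' : (0 : ℚ) < q := by exact_mod_cast hq1
      have := mem_iInter.1 hkk ⟨⟨{h}, by simpa using hh⟩, ⟨q, hq1'⟩⟩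
      obtain ⟨h1, -⟩ := this
      have := h1 h (Finset.mem_singleton_self h)
      linarith
    -- hence g collapses it too, contradiction
    have hgz : ρ (g k) (g k') ≤ 0 := by
      have hclosedset : IsClosed {f : X → X | ρ (f k) (f k') ≤ 0} :=
        isClosed_le (hcd2 k k') continuous_const
      have hsub : Aω ⊆ {f : X → X | ρ (f k) (f k') ≤ 0} := fun h hh =>
        le_of_eq (hcollapse h hh)
      exact (closure_minimal hsub hclosedset) hg
    have := mem_iInter.1 hkk ⟨⟨∅, by simp⟩, ⟨1, one_pos⟩⟩
    obtain ⟨-, h2⟩ := this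
    linarith
  -- saturation: maps in Hs agreeing on all coordinates are ρ-indistinguishable
  have hSAT : ∀ g ∈ Hs, ∀ g' ∈ Hs,
      (∀ d ∈ Dω, ∀ s ∈ S, ρ (g d) s = ρ (g' d) s) → ∀ k, ρ (g k) (g' k) = 0 := by
    intro g hg g' hg' hagree k
    refine le_antisymm ?_ (hρ0 _ _)
    have hkey : ∀ η : ℝ, 0 < η → ρ (g k) (g' k) < η := by
      intro η hη
      obtain ⟨F₁, hF₁, θ₁, hθ₁, hmod₁⟩ := hML g hg (η / 4) (by positivity)
      obtain ⟨F₂, hF₂, θ₂, hθ₂, hmod₂⟩ := hML g' hg' (η / 4) (by positivity)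
      set F : Finset (X → X) := F₁ ∪ F₂ with hF
      have hFAω : ↑F ⊆ Aω := by
        rw [hF, Finset.coe_union]; exact union_subset hF₁ hF₂
      set θ : ℚ := min θ₁ θ₂ with hθdef
      have hθ : 0 < θ := lt_min hθ₁ hθ₂
      obtain ⟨n, hn⟩ := exists_stage hAmono F id (fun z hz => hFAω hz)
      have hFE : ↑F ⊆ E := fun h hh => hAωE (hFAω hh)
      have hnet := hnetF F θ hFE hθ
      obtain ⟨d, hdN, hd⟩ := hnet k
      have hdDω : d ∈ Dω := by
        refine mem_iUnion.2 ⟨n + 1, ?_⟩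
        exact hP2 n F θ (fun z hz => hn z hz) hθ hdN
      -- g k is close to g d, and similarly for g'
      have h1 : ρ (g k) (g d) < η / 4 := by
        refine hmod₁ k d fun h hh => ?_
        have := hd h (Finset.mem_union_left _ hh)
        rw [hρsymm]
        refine le_trans this.le ?_
        exact_mod_cast min_le_left θ₁ θ₂
      have h2 : ρ (g' d) (g' k) < η / 4 := by
        rw [hρsymm]
        refine hmod₂ k d fun h hh => ?_
        have := hd h (Finset.mem_union_right _ hh)
        rw [hρsymm]
        refine le_trans this.le ?_
        exact_mod_cast min_le_right θ₁ θ₂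
      -- g d is close to g' d via a common approximant in S
      obtain ⟨s, hsS, hs⟩ := hSdense (g d) (η / 4) (by positivity)
      have h3 : ρ (g d) (g' d) < η / 2 := by
        have h4 : ρ (g' d) s = ρ (g d) s := (hagree d hdDω s hsS).symm
        calc ρ (g d) (g' d) ≤ ρ (g d) s + ρ s (g' d) := hρtri _ _ _
          _ = ρ (g d) s + ρ (g' d) s := by rw [hρsymm s (g' d)]
          _ = ρ (g d) s + ρ (g d) s := by rw [h4]
          _ < η / 2 := by linarith
      calc ρ (g k) (g' k) ≤ ρ (g k) (g d) + ρ (g d) (g' k) := hρtri _ _ _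
        _ ≤ ρ (g k) (g d) + (ρ (g d) (g' d) + ρ (g' d) (g' k)) := by
            linarith [hρtri (g d) (g' d) (g' k)]
        _ < η := by linarith
    by_contra hpos
    push_neg at hpos
    exact absurd (hkey _ hpos) (lt_irrefl _)
  -- the countable family of closed pieces covering Hs
  set VI : Set (ℕ × Finset (X → X) × ℚ × Finset (X × X)) := {i |
    ↑i.2.1 ⊆ A i.1 ∧ 0 < i.2.2.1 ∧
    (∀ z ∈ i.2.2.2, z.1 ∈ netF i.2.1 i.2.2.1 ∧ z.2 ∈ S) ∧
    ∀ d ∈ netF i.2.1 i.2.2.1, ∃ s, (d, s) ∈ i.2.2.2} with hVIdef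
  set Piece : ℕ × Finset (X → X) × ℚ × Finset (X × X) → Set (X → X) := fun i =>
    {g | g ∈ Hs ∧ (∀ z ∈ i.2.2.2, ρ (g z.1) z.2 ≤ c / 8) ∧
      ∀ k k', (∀ h ∈ i.2.1, ρ (h k) (h k') ≤ (i.2.2.1 : ℝ)) →
        ρ (g k) (g k') ≤ c / 8} with hPiecedef
  have hAωcount : Aω.Countable := countable_iUnion fun n => (hAcount n).1
  have hDωcount : Dω.Countable := countable_iUnion fun n => (hAcount n).2
  have hVIcount : VI.Countable := by
    have hbig : VI ⊆ (univ : Set ℕ) ×ˢ ({F : Finset (X → X) | ↑F ⊆ Aω} ×ˢ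
        ((univ : Set ℚ) ×ˢ {Γ : Finset (X × X) | ↑Γ ⊆ Dω ×ˢ S})) := by
      rintro ⟨n, F, θ, Γ⟩ ⟨h1, h2, h3, -⟩
      refine ⟨mem_univ _, ?_, mem_univ _, ?_⟩
      · intro h hh
        exact mem_iUnion.2 ⟨n, h1 hh⟩
      · intro z hz
        obtain ⟨hz1, hz2⟩ := h3 z hz
        have : (z.1 : X) ∈ (↑(netF F θ) : Set X) := hz1
        have hz1' : z.1 ∈ Dω := by
          by_cases hcase : ↑F ⊆ A n ∧ 0 < θ
          · exact mem_iUnion.2 ⟨n + 1, hP2 n F θ hcase.1 hcase.2 this⟩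
          · exact absurd ⟨h1, h2⟩ hcase
        exact ⟨hz1', hz2⟩
    refine Set.Countable.mono hbig ?_
    refine Set.Countable.prod (Set.to_countable _) ?_
    refine Set.Countable.prod (countable_finsets hAωcount) ?_
    refine Set.Countable.prod (Set.to_countable _) ?_
    exact countable_finsets (hDωcount.prod hSc)
  have hPiececlosed : ∀ i, IsClosed (Piece i) := by
    rintro ⟨n, F, θ, Γ⟩
    have hform : Piece (n, F, θ, Γ) =
        Hs ∩ ((⋂ z ∈ Γ, {g : X → X | ρ (g z.1) z.2 ≤ c / 8}) ∩
          (⋂ k, ⋂ k', ⋂ (_ : ∀ h ∈ F, ρ (h k) (h k') ≤ (θ : ℝ)),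
            {g : X → X | ρ (g k) (g k') ≤ c / 8})) := by
      ext g
      simp only [hPiecedef, mem_setOf_eq, mem_inter_iff, mem_iInter]
      try tauto
    rw [hform]
    refine IsClosed.inter isClosed_closure (IsClosed.inter ?_ ?_)
    · exact isClosed_biInter fun z _ => isClosed_le (hcd z.1 z.2) continuous_const
    · refine isClosed_iInter fun k => isClosed_iInter fun k' => isClosed_iInter fun _ => ?_
      exact isClosed_le (hcd2 k k') continuous_const
  have hPiececover : ∀ g ∈ Hs, ∃ i ∈ VI, g ∈ Piece i := by
    intro g hg
    obtain ⟨F, hFAω, θ, hθ, hmod⟩ := hML g hg (c / 8) (by positivity)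
    obtain ⟨n, hn⟩ := exists_stage hAmono F id (fun z hz => hFAω hz)
    have hsel : ∀ d : X, ∃ s, s ∈ S ∧ ρ (g d) s ≤ c / 8 := by
      intro d
      obtain ⟨s, hs1, hs2⟩ := hSdense (g d) (c / 8) (by positivity)
      exact ⟨s, hs1, hs2.le⟩
    choose sel hselS hselρ using hsel
    refine ⟨(n, F, θ, (netF F θ).image fun d => (d, sel d)), ?_, ?_⟩
    · refine ⟨fun z hz => hn z hz, hθ, ?_, ?_⟩
      · intro z hz
        obtain ⟨d, hd, rfl⟩ := Finset.mem_image.1 hz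
        exact ⟨hd, hselS d⟩
      · intro d hd
        exact ⟨sel d, Finset.mem_image_of_mem _ hd⟩
    · refine ⟨hg, ?_, ?_⟩
      · intro z hz
        obtain ⟨d, hd, rfl⟩ := Finset.mem_image.1 hz
        exact hselρ d
      · intro k k' hcond
        exact (hmod k k' hcond).le
  have hPiecediam : ∀ i ∈ VI, ∀ g ∈ Piece i, ∀ g' ∈ Piece i, ∀ k,
      ρ (g k) (g' k) ≤ c / 2 := by
    rintro ⟨n, F, θ, Γ⟩ ⟨hi1, hi2, hi3, hi4⟩ g ⟨hgHs, hgΓ, hgmod⟩ g' ⟨hg'Hs, hg'Γ, hg'mod⟩ k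
    have hFE : ↑F ⊆ E := fun h hh => hAωE (mem_iUnion.2 ⟨n, hi1 hh⟩)
    obtain ⟨d, hdN, hd⟩ := hnetF F θ hFE hi2 k
    obtain ⟨s, hsΓ⟩ := hi4 d hdN
    have h1 : ρ (g k) (g d) ≤ c / 8 := by
      refine hgmod k d fun h hh => ?_
      rw [hρsymm]
      exact (hd h hh).le
    have h2 : ρ (g' k) (g' d) ≤ c / 8 := by
      refine hg'mod k d fun h hh => ?_
      rw [hρsymm]
      exact (hd h hh).le
    have h3 : ρ (g d) s ≤ c / 8 := hgΓ (d, s) hsΓ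
    have h4 : ρ (g' d) s ≤ c / 8 := hg'Γ (d, s) hsΓ
    calc ρ (g k) (g' k) ≤ ρ (g k) (g d) + ρ (g d) (g' k) := hρtri _ _ _
      _ ≤ ρ (g k) (g d) + (ρ (g d) s + ρ s (g' k)) := by linarith [hρtri (g d) s (g' k)]
      _ ≤ ρ (g k) (g d) + (ρ (g d) s + (ρ s (g' d) + ρ (g' d) (g' k))) := by
          linarith [hρtri s (g' d) (g' k)]
      _ = ρ (g k) (g d) + (ρ (g d) s + (ρ (g' d) s + ρ (g' k) (g' d))) := by
          rw [hρsymm s (g' d), hρsymm (g' d) (g' k)]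
      _ ≤ c / 2 := by linarith
  -- Hs is nonempty
  have hHsne : Hs.Nonempty := by
    have hGLe : (GLs ρ (∅ : Finset (X × X × ℚ × ℚ)) ∩ E).Nonempty := by
      obtain ⟨e, he⟩ := hne
      refine ⟨e, ?_, he⟩
      intro z hz
      simp at hz
    have hmem := (hP1 0 ∅ (by simp) hGLe).1
    exact ⟨(pick ∅).1, subset_closure (mem_iUnion.2 ⟨1, hmem⟩)⟩
  -- the coordinate map into a countable product of lines
  haveI hDωsub : Countable ↥Dω := hDωcount.to_subtype
  haveI hSsub : Countable ↥S := hSc.to_subtype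
  set Θ : (X → X) → (↥Dω × ↥S → ℝ) := fun g i => ρ (g i.1.1) i.2.1 with hΘdef
  have hΘcont : Continuous Θ := continuous_pi fun i => hcd i.1.1 i.2.1
  set Y : Set (↥Dω × ↥S → ℝ) := Θ '' Hs with hYdef
  have hYcp : IsCompact Y := hHscp.image hΘcont
  haveI : CompactSpace ↥Y := isCompact_iff_compactSpace.1 hYcp
  haveI : Nonempty ↥Y := ⟨⟨Θ hHsne.choose, mem_image_of_mem _ hHsne.choose_spec⟩⟩
  haveI : Countable ↥VI := hVIcount.to_subtype
  -- Baire category on Y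
  have hclosed : ∀ i : ↥VI, IsClosed (Subtype.val ⁻¹' (Θ '' Piece i.1) : Set ↥Y) := by
    intro i
    refine IsClosed.preimage continuous_subtype_val ?_
    exact (((hPiececlosed i.1).isCompact).image hΘcont).isClosed
  have hcover : (⋃ i : ↥VI, (Subtype.val ⁻¹' (Θ '' Piece i.1) : Set ↥Y)) = univ := by
    ext y
    simp only [mem_iUnion, mem_univ, iff_true]
    obtain ⟨g, hg, hgy⟩ := y.2
    obtain ⟨i, hiVI, hgPiece⟩ := hPiececover g hg
    exact ⟨⟨i, hiVI⟩, g, hgPiece, hgy⟩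
  obtain ⟨i₀, y₀, hy₀⟩ := nonempty_interior_of_iUnion_of_closed hclosed hcover
  have h1 : (Subtype.val ⁻¹' (Θ '' Piece i₀.1) : Set ↥Y) ∈ 𝓝 y₀ :=
    mem_interior_iff_mem_nhds.1 hy₀
  rw [nhds_subtype_eq_comap] at h1
  obtain ⟨t, ht, htsub⟩ := Filter.mem_comap.1 h1
  obtain ⟨O, hOt, hOopen, hy₀O⟩ := mem_nhds_iff.1 ht
  obtain ⟨I, u, hIu, hpi⟩ := isOpen_pi_iff.1 hOopen _ hy₀O
  -- rational intervals inside the coordinates of the box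
  have hrat : ∀ a : ↥Dω × ↥S, ∃ q₁ q₂ : ℚ, a ∈ I →
      ((q₁ : ℝ) < (y₀ : ↥Dω × ↥S → ℝ) a ∧ ((y₀ : ↥Dω × ↥S → ℝ) a < q₂) ∧
        ∀ x : ℝ, (q₁ : ℝ) < x → x < (q₂ : ℝ) → x ∈ u a) := by
    intro a
    by_cases ha : a ∈ I
    · obtain ⟨hopen, hmem⟩ := hIu a ha
      obtain ⟨r, hr, hball⟩ := Metric.isOpen_iff.1 hopen _ hmem
      obtain ⟨q₁, hq₁, hq₁'⟩ := exists_rat_btwn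
        (sub_lt_self ((y₀ : ↥Dω × ↥S → ℝ) a) hr)
      obtain ⟨q₂, hq₂, hq₂'⟩ := exists_rat_btwn
        (lt_add_of_pos_right ((y₀ : ↥Dω × ↥S → ℝ) a) hr)
      refine ⟨q₁, q₂, fun _ => ⟨hq₁', hq₂, fun x hx1 hx2 => hball ?_⟩⟩
      rw [Metric.mem_ball, Real.dist_eq, abs_lt]
      constructor <;> linarith
    · exact ⟨0, 0, fun h => absurd h ha⟩
  choose q₁ q₂ hq using hrat
  -- the finite data set
  set L : Finset (X × X × ℚ × ℚ) :=
    I.image (fun a => ((a.1.1 : X), ((a.2.1 : X), q₁ a, q₂ a))) with hLdef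
  obtain ⟨g₀, hg₀Hs, hg₀y⟩ := y₀.2
  have hg₀GL : g₀ ∈ GLs ρ L := by
    intro z hz
    obtain ⟨a, haI, rfl⟩ := Finset.mem_image.1 hz
    have h2 : ρ (g₀ a.1.1) a.2.1 = (y₀ : ↥Dω × ↥S → ℝ) a := by
      rw [← hg₀y]
    refine ⟨?_, ?_⟩
    · rw [h2]; exact (hq a haI).1
    · rw [h2]; exact (hq a haI).2.1
  have hGLne : (GLs ρ L ∩ E).Nonempty := ⟨g₀, hg₀GL, hHsE hg₀Hs⟩
  -- a stage containing all the first coordinates of L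
  obtain ⟨m, hm⟩ := exists_stage hDmono L (fun z => z.1) (by
    intro z hz
    obtain ⟨a, haI, rfl⟩ := Finset.mem_image.1 hz
    exact a.1.2)
  have hLcond : ∀ z ∈ L, z.1 ∈ D m ∧ z.2.1 ∈ S := by
    intro z hz
    refine ⟨hm z hz, ?_⟩
    obtain ⟨a, haI, rfl⟩ := Finset.mem_image.1 hz
    exact a.2.2
  -- the separated pair lands inside the piece; contradiction
  obtain ⟨hg₁, hg₂, k₀, hk₀⟩ := hpick L hGLne
  obtain ⟨hg₁A, hg₂A⟩ := hP1 m L hLcond hGLne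
  have hg₁Hs : (pick L).1 ∈ Hs := subset_closure (mem_iUnion.2 ⟨m + 1, hg₁A⟩)
  have hg₂Hs : (pick L).2 ∈ Hs := subset_closure (mem_iUnion.2 ⟨m + 1, hg₂A⟩)
  have hΘpi : ∀ g, g ∈ GLs ρ L → Θ g ∈ (↑I : Set (↥Dω × ↥S)).pi u := by
    intro g hgGL
    intro a haI
    have hz : ((a.1.1 : X), ((a.2.1 : X), q₁ a, q₂ a)) ∈ L :=
      Finset.mem_image_of_mem _ haI
    obtain ⟨hlt1, hlt2⟩ := hgGL _ hz
    exact (hq a haI).2.2 _ hlt1 hlt2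
  have hkey : ∀ g, g ∈ GLs ρ L → g ∈ Hs → ∃ g'' ∈ Piece i₀.1, Θ g'' = Θ g := by
    intro g hgGL hgHs
    have hY : Θ g ∈ Y := mem_image_of_mem _ hgHs
    have hmem : (⟨Θ g, hY⟩ : ↥Y) ∈ (Subtype.val ⁻¹' (Θ '' Piece i₀.1) : Set ↥Y) := by
      apply htsub
      show Θ g ∈ t
      exact hOt (hpi (hΘpi g hgGL))
    obtain ⟨g'', hg''P, hg''Θ⟩ := hmem
    exact ⟨g'', hg''P, hg''Θ⟩
  obtain ⟨g₁'', hg₁''P, hg₁''Θ⟩ := hkey _ hg₁.1 hg₁Hs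
  obtain ⟨g₂'', hg₂''P, hg₂''Θ⟩ := hkey _ hg₂.1 hg₂Hs
  have hg₁''Hs : g₁'' ∈ Hs := hg₁''P.1
  have hg₂''Hs : g₂'' ∈ Hs := hg₂''P.1
  have hzero₁ : ∀ k, ρ (g₁'' k) ((pick L).1 k) = 0 := by
    refine hSAT _ hg₁''Hs _ hg₁Hs fun d hd s hs => ?_
    have := congrFun hg₁''Θ (⟨⟨d, hd⟩, ⟨s, hs⟩⟩ : ↥Dω × ↥S)
    exact this
  have hzero₂ : ∀ k, ρ (g₂'' k) ((pick L).2 k) = 0 := by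
    refine hSAT _ hg₂''Hs _ hg₂Hs fun d hd s hs => ?_
    have := congrFun hg₂''Θ (⟨⟨d, hd⟩, ⟨s, hs⟩⟩ : ↥Dω × ↥S)
    exact this
  have hdiam := hPiecediam i₀.1 i₀.2 g₁'' hg₁''P g₂'' hg₂''P k₀
  have hfinal : ρ ((pick L).1 k₀) ((pick L).2 k₀) ≤ c / 2 := by
    calc ρ ((pick L).1 k₀) ((pick L).2 k₀)
        ≤ ρ ((pick L).1 k₀) (g₁'' k₀) + ρ (g₁'' k₀) ((pick L).2 k₀) := hρtri _ _ _
      _ ≤ ρ ((pick L).1 k₀) (g₁'' k₀) +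
          (ρ (g₁'' k₀) (g₂'' k₀) + ρ (g₂'' k₀) ((pick L).2 k₀)) := by
          linarith [hρtri (g₁'' k₀) (g₂'' k₀) ((pick L).2 k₀)]
      _ = ρ (g₁'' k₀) ((pick L).1 k₀) +
          (ρ (g₁'' k₀) (g₂'' k₀) + ρ (g₂'' k₀) ((pick L).2 k₀)) := by
          rw [hρsymm ((pick L).1 k₀) (g₁'' k₀)]
      _ ≤ c / 2 := by rw [hzero₁, hzero₂]; linarith
  linarith

/-- If the closed Ellis-type set `E` is a group of continuous maps, then fragmentation
upgrades to uniform equicontinuity. -/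
lemma equicontinuity_of_group {E : Set (X → X)} (hcl : IsClosed E) (hid : id ∈ E)
    (hcont : ∀ g ∈ E, Continuous g)
    (hmul : ∀ p ∈ E, ∀ q ∈ E, p ∘ q ∈ E)
    (hinv : ∀ p ∈ E, ∃ q ∈ E, q ∘ p = id ∧ p ∘ q = id)
    {ε : Set (X × X)} (hε : ε ∈ 𝓤 X) :
    ∃ δ ∈ 𝓤 X, ∀ x y : X, (x, y) ∈ δ → ∀ g ∈ E, (g x, g y) ∈ ε := by
  classical
  obtain ⟨ρ, hρ0, hρs, hρsymm, hρtri, hρball, hρcont, hρε⟩ := exists_pseudometric hε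
  obtain ⟨G, hGopen, hGne, hGdiam⟩ := fragmentation hcl ⟨id, hid⟩ hcont hρ0 hρs
    hρsymm hρtri hρcont (c := 1 / 4) (by norm_num)
  obtain ⟨p₀, hp₀G, hp₀E⟩ := hGne
  -- an inverse function
  obtain ⟨inv, hinv'⟩ : ∃ inv : (X → X) → (X → X), ∀ p ∈ E,
      inv p ∈ E ∧ inv p ∘ p = id ∧ p ∘ inv p = id := by
    have h : ∀ p : X → X, ∃ q : X → X, p ∈ E → (q ∈ E ∧ q ∘ p = id ∧ p ∘ q = id) := by
      intro p
      by_cases hp : p ∈ E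
      · obtain ⟨q, hq1, hq2, hq3⟩ := hinv p hp
        exact ⟨q, fun _ => ⟨hq1, hq2, hq3⟩⟩
      · exact ⟨id, fun h => absurd h hp⟩
    choose inv hinv0 using h
    exact ⟨inv, fun p hp => hinv0 p hp⟩
  -- uniform continuity of p₀ with respect to ρ
  have hp₀u : UniformContinuous p₀ :=
    CompactSpace.uniformContinuous_of_continuous (hcont _ hp₀E)
  set δV : Set (X × X) := {xy : X × X | ρ (p₀ xy.1) (p₀ xy.2) < 1 / 4} with hδVdef
  have hδV : δV ∈ 𝓤 X := by
    have h2 := (Filter.tendsto_def.1 hp₀u) _ (hρball (1 / 4) (by norm_num))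
    exact h2
  -- members of G ∩ E are uniformly equicontinuous along δV
  have h1 : ∀ q ∈ G ∩ E, ∀ x y : X, (x, y) ∈ δV → ρ (q x) (q y) < 1 := by
    intro q hq x y hxy
    have h2 : ρ (q x) (p₀ x) ≤ 1 / 4 := hGdiam q hq p₀ ⟨hp₀G, hp₀E⟩ x
    have h3 : ρ (q y) (p₀ y) ≤ 1 / 4 := hGdiam q hq p₀ ⟨hp₀G, hp₀E⟩ y
    have h4 : ρ (p₀ x) (p₀ y) < 1 / 4 := hxy
    calc ρ (q x) (q y) ≤ ρ (q x) (p₀ x) + ρ (p₀ x) (q y) := hρtri _ _ _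
      _ ≤ ρ (q x) (p₀ x) + (ρ (p₀ x) (p₀ y) + ρ (p₀ y) (q y)) := by
          linarith [hρtri (p₀ x) (p₀ y) (q y)]
      _ = ρ (q x) (p₀ x) + (ρ (p₀ x) (p₀ y) + ρ (q y) (p₀ y)) := by
          rw [hρsymm (p₀ y) (q y)]
      _ < 1 := by linarith
  -- covering E by right translates of G
  have hWopen : ∀ r : X → X, IsOpen ((fun q : X → X => q ∘ inv r) ⁻¹' G) := by
    intro r
    refine hGopen.preimage ?_
    exact continuous_pi fun x => continuous_apply (inv r x)
  have hcoverE : E ⊆ ⋃ r ∈ E, (fun q : X → X => q ∘ inv r) ⁻¹' G := by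
    intro p hp
    have hr : inv p₀ ∘ p ∈ E := hmul _ (hinv' p₀ hp₀E).1 _ hp
    refine mem_biUnion hr ?_
    show p ∘ inv (inv p₀ ∘ p) ∈ G
    have h5 : p ∘ inv (inv p₀ ∘ p) = p₀ := by
      funext x
      have h6 := congrFun (hinv' _ hr).2.2 x
      have h7 := congrFun (hinv' p₀ hp₀E).2.2 (p (inv (inv p₀ ∘ p) x))
      simp only [Function.comp_apply, id_eq] at h6 h7 ⊢
      rw [← h7, h6]
    rw [h5]
    exact hp₀G
  have hEcp : IsCompact E := hcl.isCompact
  obtain ⟨b, hbE, hbfin, hbcover⟩ := hEcp.elim_finite_subcover_image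
    (fun r _ => hWopen r) hcoverE
  -- the entourage δ
  set δ : Set (X × X) := ⋂ r ∈ b, (fun xy : X × X => (r xy.1, r xy.2)) ⁻¹' δV with hδdef
  have hδU : δ ∈ 𝓤 X := by
    refine (Filter.biInter_mem hbfin).2 fun r hr => ?_
    have hru : UniformContinuous r :=
      CompactSpace.uniformContinuous_of_continuous (hcont r (hbE hr))
    exact (Filter.tendsto_def.1 hru) _ hδV
  refine ⟨δ, hδU, ?_⟩
  intro x y hxy g hg
  obtain ⟨r, hrb, hgW⟩ := mem_iUnion₂.1 (hbcover hg)
  have hrE : r ∈ E := hbE hrb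
  have hq : g ∘ inv r ∈ G ∩ E := ⟨hgW, hmul _ hg _ (hinv' r hrE).1⟩
  have hrxy : (r x, r y) ∈ δV := by
    have := mem_iInter₂.1 hxy r hrb
    exact this
  have h7 : ρ ((g ∘ inv r) (r x)) ((g ∘ inv r) (r y)) < 1 :=
    h1 _ hq (r x) (r y) hrxy
  have h8 : (g ∘ inv r) (r x) = g x := by
    have := congrFun (hinv' r hrE).2.1 x
    simp only [Function.comp_apply, id_eq] at this ⊢
    rw [this]
  have h9 : (g ∘ inv r) (r y) = g y := by
    have := congrFun (hinv' r hrE).2.1 y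
    simp only [Function.comp_apply, id_eq] at this ⊢
    rw [this]
  rw [h8, h9] at h7
  exact hρε _ _ h7

end WapEquic

/-- Theorem 2.32A (first equivalence): for a minimal, universally transitive
semiflow of continuous self-maps on a compact Hausdorff space, weakly almost
periodic is equivalent to equicontinuous. -/
theorem minimal_universally_transitive_wap_iff_equicontinuous {T X : Type*}
    [Monoid T] [TopologicalSpace T] [UniformSpace X] [CompactSpace X] [T2Space X]
    [MulAction T X] [ContinuousSMul T X]
    (hmin : ∀ x : X, Dense (Set.range fun t : T => t • x))
    (huniv : ∃ x : X, ∀ y : X, ∃ a : X ≃ₜ X,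
      (∀ (t : T) (z : X), a (t • z) = t • a z) ∧ a x = y) :
    (∀ p ∈ closure (Set.range fun t : T => fun x : X => t • x), Continuous p) ↔
    (∀ ε ∈ uniformity X, ∃ δ ∈ uniformity X, ∀ x y : X, (x, y) ∈ δ →
      ∀ t : T, (t • x, t • y) ∈ ε) := by
  classical
  set E : Set (X → X) := closure (Set.range fun t : T => fun x : X => t • x) with hEdef
  have hEcl : IsClosed E := isClosed_closure
  have hid : id ∈ E := by
    apply subset_closure
    refine ⟨1, ?_⟩
    funext x
    simp [one_smul]
  have hcompT : ∀ (t : T) (q : X → X), q ∈ E → ((fun x : X => t • x) ∘ q) ∈ E := by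
    intro t q hq
    have hΦ : Continuous fun f : X → X => (fun x : X => t • x) ∘ f := by
      refine continuous_pi fun x => ?_
      exact (continuous_apply x).const_smul t
    have hmaps : Set.MapsTo (fun f : X → X => (fun x : X => t • x) ∘ f)
        (Set.range fun s : T => fun x : X => s • x)
        (Set.range fun s : T => fun x : X => s • x) := by
      rintro _ ⟨s, rfl⟩
      refine ⟨t * s, ?_⟩
      funext x
      simp [mul_smul]
    exact map_mem_closure hΦ hq hmaps
  have hmul : ∀ p ∈ E, ∀ q ∈ E, p ∘ q ∈ E := by
    intro p hp q hq
    have hΨ : Continuous fun f : X → X => f ∘ q :=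
      continuous_pi fun x => continuous_apply (q x)
    have hmaps : Set.MapsTo (fun f : X → X => f ∘ q)
        (Set.range fun s : T => fun x : X => s • x) E := by
      rintro _ ⟨s, rfl⟩
      exact hcompT s q hq
    have := map_mem_closure hΨ hp hmaps
    rwa [hEcl.closure_eq] at this
  constructor
  · -- weakly almost periodic → equicontinuous
    intro hWAP ε hε
    have hcomm : ∀ a : X ≃ₜ X, (∀ (t : T) (z : X), a (t • z) = t • a z) →
        ∀ p ∈ E, ∀ x, a (p x) = p (a x) := by
      intro a hat p hp x
      have hCcl : IsClosed {f : X → X | ∀ z, a (f z) = f (a z)} := by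
        have hform : {f : X → X | ∀ z, a (f z) = f (a z)} =
            ⋂ z, {f : X → X | a (f z) = f (a z)} := by
          ext f; simp
        rw [hform]
        refine isClosed_iInter fun z => ?_
        exact isClosed_eq (a.continuous.comp (continuous_apply z)) (continuous_apply (a z))
      have hsub : (Set.range fun s : T => fun x : X => s • x) ⊆
          {f : X → X | ∀ z, a (f z) = f (a z)} := by
        rintro _ ⟨s, rfl⟩ z
        exact hat s z
      exact (closure_minimal hsub hCcl) hp x
    have hidem : ∀ u ∈ E, u ∘ u = u → u = id := by
      intro u hu huu
      obtain ⟨x₀, ha⟩ := huniv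
      funext y
      obtain ⟨a, haT, hax⟩ := ha y
      obtain ⟨b, hbT, hbx⟩ := ha (u x₀)
      have hzfix : u (u x₀) = u x₀ := congrFun huu x₀
      have hbc : ∀ x, b (u x) = u (b x) := fun x => hcomm b hbT u hu x
      have hbsc : ∀ w, b.symm (u w) = u (b.symm w) := by
        intro w
        have h1 := hbc (b.symm w)
        rw [b.apply_symm_apply] at h1
        have h2 := congrArg b.symm h1
        rw [b.symm_apply_apply] at h2
        exact h2.symm
      have hx₀ : x₀ = b.symm (u x₀) := by
        rw [← hbx, b.symm_apply_apply]
      have hac : ∀ x, a (u x) = u (a x) := fun x => hcomm a haT u hu x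
      calc u y = u (a x₀) := by rw [hax]
        _ = u (a (b.symm (u x₀))) := by rw [← hx₀]
        _ = a (u (b.symm (u x₀))) := (hac _).symm
        _ = a (b.symm (u (u x₀))) := by rw [← hbsc]
        _ = a (b.symm (u x₀)) := by rw [hzfix]
        _ = a x₀ := by rw [← hx₀]
        _ = y := hax
    have hinv : ∀ p ∈ E, ∃ q ∈ E, q ∘ p = id ∧ p ∘ q = id := fun p hp =>
      WapEquic.exists_inverse hEcl hmul hWAP hidem hp
    obtain ⟨δ, hδ, hδp⟩ := WapEquic.equicontinuity_of_group hEcl hid hWAP hmul hinv hε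
    refine ⟨δ, hδ, fun x y hxy t => ?_⟩
    exact hδp x y hxy _ (subset_closure ⟨t, rfl⟩)
  · -- equicontinuous → weakly almost periodic
    intro hEq p hp
    have hpu : UniformContinuous p := by
      rw [UniformContinuous, Filter.tendsto_def]
      intro ε hε
      obtain ⟨ε', ⟨hε'U, hε'cl⟩, hε'sub⟩ := uniformity_hasBasis_closed.mem_iff.1 hε
      obtain ⟨δ, hδU, hδ⟩ := hEq ε' hε'U
      have hCcl : IsClosed {f : X → X | ∀ xy : X × X, xy ∈ δ → (f xy.1, f xy.2) ∈ ε'} := by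
        have hform : {f : X → X | ∀ xy : X × X, xy ∈ δ → (f xy.1, f xy.2) ∈ ε'} =
            ⋂ xy : X × X, ⋂ (_ : xy ∈ δ), {f : X → X | (f xy.1, f xy.2) ∈ ε'} := by
          ext f; simp
        rw [hform]
        refine isClosed_iInter fun xy => isClosed_iInter fun _ => ?_
        refine IsClosed.preimage ?_ hε'cl
        exact (continuous_apply xy.1).prodMk (continuous_apply xy.2)
      have hsub : (Set.range fun t : T => fun x : X => t • x) ⊆
          {f : X → X | ∀ xy : X × X, xy ∈ δ → (f xy.1, f xy.2) ∈ ε'} := by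
        rintro _ ⟨t, rfl⟩ xy hxy
        exact hδ xy.1 xy.2 hxy t
      have hpC := (closure_minimal hsub hCcl) hp
      refine Filter.mem_of_superset hδU ?_
      intro xy hxy
      exact hε'sub (hpC xy hxy)
    exact hpu.continuous
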